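/- Let (F, G) be a Frobenius pair between abelian categories with enough projectives. If X is a Gorenstein projective object of C, then F(X) is a Gorenstein projective object of D. -/

import Mathlib

open CategoryTheory Limits

/-- An object `M` of an abelian category is *Gorenstein projective* if it is a syzygy
(the kernel `ker(P⁰ → P¹)`) of an acyclic complex `P` of projective objects such that
`Hom(P, Q)` is acyclic for every projective `Q`. -/
def IsGorensteinProjective {A : Type*} [Category A] [Abelian A] (M : A) : Prop :=
  ∃ P : CochainComplex A ℤ,
    (∀ n : ℤ, Projective (P.X n)) ∧
    (∀ n : ℤ, P.ExactAt n) ∧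
    Nonempty (M ≅ P.cycles 0) ∧
    ∀ (Q : A), Projective Q → ∀ (n : ℤ) (f : P.X n ⟶ Q), P.d (n - 1) n ≫ f = 0 →
      ∃ g : P.X (n + 1) ⟶ Q, P.d n (n + 1) ≫ g = f

/-- `φ : X ⟶ M` is an `𝒳`-precover of `M` if `X ∈ 𝒳` and every morphism from an object
of `𝒳` to `M` factors through `φ`. -/
def IsPrecover {A : Type*} [Category A] (𝒳 : A → Prop) {X M : A} (φ : X ⟶ M) : Prop :=
  𝒳 X ∧ ∀ (X' : A), 𝒳 X' → ∀ f : X' ⟶ M, ∃ g : X' ⟶ X, g ≫ φ = f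

/-- If `(F, G)` is a Frobenius pair between abelian categories with enough projectives
and `X` is Gorenstein projective in `C`, then `F X` is Gorenstein projective in `D`. -/
theorem frobenius_pair_map_gorensteinProjective {C D : Type*} [Category C] [Category D]
    [Abelian C] [Abelian D] [EnoughProjectives C] [EnoughProjectives D]
    (F : C ⥤ D) (G : D ⥤ C) [F.Additive] [G.Additive]
    (adj₁ : F ⊣ G) (adj₂ : G ⊣ F) (X : C) (hX : IsGorensteinProjective X) :
    IsGorensteinProjective (F.obj X) := by
  haveI : F.IsLeftAdjoint := ⟨G, ⟨adj₁⟩⟩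
  haveI : F.IsRightAdjoint := ⟨G, ⟨adj₂⟩⟩
  haveI : G.IsLeftAdjoint := ⟨F, ⟨adj₂⟩⟩
  obtain ⟨P, hproj, hexact, ⟨e⟩, hlift⟩ := hX
  refine ⟨(F.mapHomologicalComplex _).obj P, ?_, ?_, ?_, ?_⟩
  · intro n
    exact adj₁.map_projective _ (hproj n)
  · intro n
    exact (hexact n).map F
  · exact ⟨F.mapIso e ≪≫ ((P.sc 0).mapCyclesIso F).symm⟩
  · intro Q hQ n f hf
    have hf' : P.d (n - 1) n ≫ (adj₁.homEquiv _ _) f = 0 := by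
      have : (adj₁.homEquiv _ _) (F.map (P.d (n - 1) n) ≫ f) =
          P.d (n - 1) n ≫ (adj₁.homEquiv _ _) f :=
        adj₁.homEquiv_naturality_left _ _
      rw [← this]
      have hf0 : F.map (P.d (n - 1) n) ≫ f = 0 := hf
      rw [hf0]
      simp [Adjunction.homEquiv_apply]
    obtain ⟨g, hg⟩ := hlift (G.obj Q) (adj₂.map_projective Q hQ) n
      ((adj₁.homEquiv _ _) f) hf'
    refine ⟨(adj₁.homEquiv _ _).symm g, ?_⟩
    apply (adj₁.homEquiv _ _).injective
    rw [show ((F.mapHomologicalComplex _).obj P).d n (n + 1) = F.map (P.d n (n + 1)) from rfl]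
    exact (adj₁.homEquiv_naturality_left (P.d n (n + 1)) ((adj₁.homEquiv _ _).symm g)).trans
      (by rw [Equiv.apply_symm_apply, hg])
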